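/- Let F be the free monoid on the two-letter alphabet {a,b} and let ℤF denote the monoid ring of F over ℤ (the monoid algebra MonoidAlgebra ℤ F), viewed as a left module over itself. Then the left ℤF-submodule of ℤF generated by the set { u·(ab − bb)·v : u, v ∈ F } (where a word w ∈ F is identified with the corresponding element of ℤF, ab − bb denotes the difference of the elements corresponding to the words ab and bb, and multiplication is in ℤF) is NOT finitely generated as a left ℤF-module. -/

import Mathlib

/-- The free monoid `F` on the two-letter alphabet `{a, b}`
(`a` is encoded as `false`, `b` as `true`). -/
abbrev F : Type := FreeMonoid Bool

/-- The letter `a`. -/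
def la : F := FreeMonoid.of false

/-- The letter `b`. -/
def lb : F := FreeMonoid.of true

/-- The monoid ring `ℤF`. -/
abbrev ZF : Type := MonoidAlgebra ℤ F

/-- The canonical image of a word `w ∈ F` in `ℤF`. -/
noncomputable def emb (w : F) : ZF := MonoidAlgebra.of ℤ F w

/-- Indicator (as a function to `ℤ`) of the words of length `N+3` starting with `a`. -/
def chi (N : ℕ) (w : F) : ℤ :=
  if w.toList.length = N + 3 ∧ w.toList.head? = some false then 1 else 0

/-- The `ℤ`-linear functional on `ℤF` induced by `chi N`. -/
noncomputable def psi (N : ℕ) : ZF →ₗ[ℤ] ℤ :=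
  Finsupp.linearCombination ℤ (chi N) ∘ₗ (MonoidAlgebra.coeffLinearEquiv ℤ).toLinearMap

lemma psi_single (N : ℕ) (w : F) (c : ℤ) : psi N (MonoidAlgebra.single w c) = c * chi N w := by
  have := Finsupp.linearCombination_single (R := ℤ) (v := chi N) c w
  rw [smul_eq_mul] at this
  show Finsupp.linearCombination ℤ (chi N) (MonoidAlgebra.single w c).coeff = _
  exact this

lemma emb_mul (w u : F) : emb w * emb u = emb (w * u) := by
  simp [emb, ← map_mul]

lemma emb_eq_single (w : F) : emb w = MonoidAlgebra.single w 1 := rfl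

lemma chi_eq (N : ℕ) (w v : F) (hv : v.toList.length ≤ N) :
    chi N (w * (la * lb) * v) = chi N (w * (lb * lb) * v) := by
  rcases hw : w.toList with _ | ⟨x, xs⟩ <;>
    simp_all [chi, la, lb, FreeMonoid.toList_mul, FreeMonoid.toList_of, hw] <;> omega

/-- key vanishing: `psi N` kills `w·(ab−bb)·v` for any `w` and short `v`. -/
lemma psi_word (N : ℕ) (w v : F) (hv : v.toList.length ≤ N) :
    psi N (emb w * (emb (la * lb) - emb (lb * lb)) * emb v) = 0 := by
  have h : emb w * (emb (la * lb) - emb (lb * lb)) * emb v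
      = emb (w * (la * lb) * v) - emb (w * (lb * lb) * v) := by
    rw [mul_sub, sub_mul, emb_mul, emb_mul, emb_mul, emb_mul]
  rw [h, map_sub, emb_eq_single, emb_eq_single, psi_single, psi_single, chi_eq N w v hv]
  ring

/-- `psi N` kills every left multiple of elements of the span of short generators. -/
lemma psi_span (N : ℕ) (x : ZF)
    (hx : x ∈ Submodule.span ZF
      {x : ZF | ∃ u v : F, v.toList.length ≤ N ∧
        x = emb u * (emb (la * lb) - emb (lb * lb)) * emb v}) :
    ∀ p : ZF, psi N (p * x) = 0 := by
  induction hx using Submodule.span_induction with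
  | mem x h =>
    obtain ⟨u, v, hv, rfl⟩ := h
    intro p
    induction p using MonoidAlgebra.induction_on with
    | of g =>
      have : (MonoidAlgebra.of ℤ F g) * (emb u * (emb (la * lb) - emb (lb * lb)) * emb v)
          = emb (g * u) * (emb (la * lb) - emb (lb * lb)) * emb v := by
        show emb g * _ = _
        simp [← emb_mul, mul_assoc]
      rw [this, psi_word N _ v hv]
    | add f g hf hg => rw [add_mul, map_add, hf, hg, add_zero]
    | smul r f hf => rw [smul_mul_assoc, map_smul, hf, smul_zero]
  | zero => intro p; rw [mul_zero, map_zero]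
  | add x y hx hy ihx ihy => intro p; rw [mul_add, map_add, ihx, ihy, add_zero]
  | smul a x hx ih => intro p; rw [smul_eq_mul, ← mul_assoc]; exact ih (p * a)

/-- The left `ℤF`-submodule of `ℤF` generated by
`{ u·(ab − bb)·v : u, v ∈ F }` is not finitely generated. -/
theorem stmt_11 :
    ¬ (Submodule.span ZF
        {x : ZF | ∃ u v : F, x = emb u * (emb (la * lb) - emb (lb * lb)) * emb v}).FG := by
  intro hfg
  classical
  set S : Set ZF :=
    {x : ZF | ∃ u v : F, x = emb u * (emb (la * lb) - emb (lb * lb)) * emb v} with hS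
  set SN : ℕ → Set ZF := fun N =>
    {x : ZF | ∃ u v : F, v.toList.length ≤ N ∧
      x = emb u * (emb (la * lb) - emb (lb * lb)) * emb v} with hSN
  have hmono : Monotone fun N => Submodule.span ZF (SN N) := by
    intro m n hmn
    apply Submodule.span_mono
    rintro x ⟨u, v, hv, rfl⟩
    exact ⟨u, v, le_trans hv hmn, rfl⟩
  have hUnion : S = ⋃ N, SN N := by
    ext x
    constructor
    · rintro ⟨u, v, rfl⟩
      exact Set.mem_iUnion.2 ⟨v.toList.length, u, v, le_refl _, rfl⟩
    · intro hx
      obtain ⟨N, u, v, _, rfl⟩ := Set.mem_iUnion.1 hx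
      exact ⟨u, v, rfl⟩
  have hsup : Submodule.span ZF S = ⨆ N, Submodule.span ZF (SN N) := by
    rw [hUnion, Submodule.span_iUnion]
  -- from FG, get a single N capturing the whole span
  obtain ⟨t, ht⟩ := hfg
  have hmem : ∀ x ∈ t, ∃ N, x ∈ Submodule.span ZF (SN N) := by
    intro x hx
    have hx' : x ∈ Submodule.span ZF S := ht ▸ Submodule.subset_span hx
    rw [hsup] at hx'
    exact (Submodule.mem_iSup_of_directed _ hmono.directed_le).1 hx'
  choose f hf using hmem
  set N : ℕ := t.sup fun x => if h : x ∈ t then f x h else 0 with hN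
  have htN : (t : Set ZF) ⊆ Submodule.span ZF (SN N) := by
    intro x hx
    have hxt : x ∈ t := hx
    have hle : f x hxt ≤ N := by
      rw [hN]
      have := Finset.le_sup (f := fun x => if h : x ∈ t then f x h else 0) hxt
      simpa only [dif_pos hxt] using this
    exact hmono hle (hf x hxt)
  have hspanle : Submodule.span ZF S ≤ Submodule.span ZF (SN N) := by
    rw [← ht]
    exact Submodule.span_le.2 htN
  -- the element (ab - bb)·b^(N+1)
  set v0 : F := FreeMonoid.ofList (List.replicate (N + 1) true) with hv0
  set x0 : ZF := emb 1 * (emb (la * lb) - emb (lb * lb)) * emb v0 with hx0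
  have hx0mem : x0 ∈ Submodule.span ZF S := Submodule.subset_span ⟨1, v0, rfl⟩
  have h0 : psi N x0 = 0 := by
    have := psi_span N x0 (hspanle hx0mem) 1
    rwa [one_mul] at this
  have h1 : psi N x0 = 1 := by
    have hx0' : x0 = emb ((la * lb) * v0) - emb ((lb * lb) * v0) := by
      have e1 : emb (1 : F) = 1 := map_one (MonoidAlgebra.of ℤ F)
      rw [hx0, e1, one_mul, sub_mul, emb_mul, emb_mul]
    rw [hx0', map_sub, emb_eq_single, emb_eq_single, psi_single, psi_single]
    have c1 : chi N ((la * lb) * v0) = 1 := by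
      simp [chi, la, lb, hv0, FreeMonoid.toList_mul, FreeMonoid.toList_of,
        FreeMonoid.toList_ofList]
    have c2 : chi N ((lb * lb) * v0) = 0 := by
      simp [chi, la, lb, hv0, FreeMonoid.toList_mul, FreeMonoid.toList_of,
        FreeMonoid.toList_ofList]
    rw [c1, c2]; ring
  rw [h0] at h1
  exact one_ne_zero h1.symm
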